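/- Let (G,X) be a G-system, x ∈ X, and F = (F_n)_{n∈D} a Følner net in G. Suppose C_F(x) is not S-generic, i.e., there is no point z ∈ C_F(x) with C_F(z) = C_F(x). Then there exists a point y ∈ C_F(x) such that the pair {x,y} is Li–Yorke chaotic for (G,X) and, for every ε > 0, the set N(x, B_ε(y)) is a central set in G and has positive upper density relative to F, i.e., d̄_F(N(x, B_ε(y))) > 0. -/

import Mathlib

open Filter Metric Set

section Defs

variable {G : Type*} [Group G] [DecidableEq G]
variable {D : Type*} [Preorder D]

/-- `F` is a (left) Følner net in `G`. -/
def IsFolnerNet (F : D → Finset G) : Prop :=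
  (∀ n, (F n).Nonempty) ∧
    ∀ g : G,
      Tendsto (fun n : D =>
          ((symmDiff ((F n).image fun h => g * h) (F n)).card : ℝ) / (F n).card)
        atTop (nhds 0)

/-- Upper density of `A ⊆ G` relative to the net `F`. -/
noncomputable def upperDensity (F : D → Finset G) (A : Set G) : ℝ :=
  sSup {α : ℝ | ∀ m : D, ∃ n : D, m ≤ n ∧
    α ≤ (((F n : Set G) ∩ A).ncard : ℝ) / (F n).card}

variable {X : Type*} [MetricSpace X] [MulAction G X]

/-- The minimal `F`-center of attraction of `x`. -/
def minCenter (F : D → Finset G) (x : X) : Set X :=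
  {y : X | ∀ U : Set X, IsOpen U → y ∈ U → 0 < upperDensity F {g : G | g • x ∈ U}}

end Defs

set_option linter.unusedSectionVars false

section Density

variable {G : Type} [Group G] [Infinite G] [DecidableEq G]
variable {D : Type*} [Preorder D] [IsDirected D (· ≤ ·)] [Nonempty D]
variable (Fol : D → Finset G)

/-- the ratio function -/
noncomputable def dRatio (n : D) (A : Set G) : ℝ :=
  (((Fol n : Set G) ∩ A).ncard : ℝ) / (Fol n).card

/-- the set whose sup is the upper density -/
def dSet (A : Set G) : Set ℝ :=
  {α : ℝ | ∀ m : D, ∃ n : D, m ≤ n ∧ α ≤ dRatio Fol n A}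

lemma upperDensity_eq (A : Set G) : upperDensity Fol A = sSup (dSet Fol A) := rfl

variable {Fol}

lemma dRatio_nonneg (n : D) (A : Set G) : 0 ≤ dRatio Fol n A := by
  apply div_nonneg <;> positivity

lemma ncard_inter_le (n : D) (A : Set G) :
    (((Fol n : Set G) ∩ A).ncard : ℝ) ≤ (Fol n).card := by
  have h : ((Fol n : Set G) ∩ A).ncard ≤ ((Fol n : Set G)).ncard :=
    Set.ncard_le_ncard inter_subset_left (Fol n).finite_toSet
  rw [Set.ncard_coe_finset] at h
  exact_mod_cast h

variable (hFol : IsFolnerNet Fol)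
include hFol

lemma folCard_pos (n : D) : (0:ℝ) < (Fol n).card := by
  exact_mod_cast (hFol.1 n).card_pos

lemma dRatio_le_one (n : D) (A : Set G) : dRatio Fol n A ≤ 1 := by
  rw [dRatio, div_le_one (folCard_pos hFol n)]
  exact ncard_inter_le n A


omit hFol in
lemma dRatio_mono (n : D) {A B : Set G} (h : A ⊆ B) : dRatio Fol n A ≤ dRatio Fol n B := by
  unfold dRatio
  have hfin : ((Fol n : Set G) ∩ B).Finite := (Fol n).finite_toSet.inter_of_left B
  gcongr

omit hFol in
lemma dRatio_union_le (n : D) (A B : Set G) :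
    dRatio Fol n (A ∪ B) ≤ dRatio Fol n A + dRatio Fol n B := by
  unfold dRatio
  rw [← add_div]
  gcongr
  rw [Set.inter_union_distrib_left]
  exact_mod_cast Set.ncard_union_le _ _

omit hFol in
lemma zero_mem_dSet (A : Set G) : (0:ℝ) ∈ dSet Fol A :=
  fun m => ⟨m, le_refl m, dRatio_nonneg m A⟩

lemma dSet_bddAbove (A : Set G) : BddAbove (dSet Fol A) := by
  refine ⟨1, fun α hα => ?_⟩
  obtain ⟨n, -, hn⟩ := hα Classical.ofNonempty
  exact hn.trans (dRatio_le_one hFol n A)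

omit hFol in
lemma upperDensity_nonneg (A : Set G) (hb : BddAbove (dSet Fol A)) :
    0 ≤ upperDensity Fol A :=
  le_csSup hb (zero_mem_dSet A)

lemma upperDensity_nonneg' (A : Set G) : 0 ≤ upperDensity Fol A :=
  upperDensity_nonneg A (dSet_bddAbove hFol A)

lemma le_upperDensity {A : Set G} {α : ℝ} (hα : α ∈ dSet Fol A) : α ≤ upperDensity Fol A :=
  le_csSup (dSet_bddAbove hFol A) hα

omit hFol in
lemma upperDensity_le {A : Set G} {β : ℝ} (hβ : ∀ α ∈ dSet Fol A, α ≤ β) :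
    upperDensity Fol A ≤ β :=
  csSup_le ⟨0, zero_mem_dSet A⟩ hβ

lemma exists_forall_lt {A : Set G} {β : ℝ} (h : upperDensity Fol A < β) :
    ∃ m : D, ∀ n : D, m ≤ n → dRatio Fol n A < β := by
  have hβ : β ∉ dSet Fol A := fun hmem => absurd (le_upperDensity hFol hmem) (not_le.mpr h)
  simp only [dSet, Set.mem_setOf_eq, not_forall, not_exists, not_and, not_le] at hβ
  obtain ⟨m, hm⟩ := hβ
  exact ⟨m, hm⟩

lemma upperDensity_mono {A B : Set G} (h : A ⊆ B) :
    upperDensity Fol A ≤ upperDensity Fol B := by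
  refine upperDensity_le fun α hα => le_upperDensity hFol (fun m => ?_)
  obtain ⟨n, hmn, hn⟩ := hα m
  exact ⟨n, hmn, hn.trans (dRatio_mono n h)⟩

lemma upperDensity_union_le (A B : Set G) :
    upperDensity Fol (A ∪ B) ≤ upperDensity Fol A + upperDensity Fol B := by
  refine upperDensity_le fun α hα => ?_
  by_contra hc
  push_neg at hc
  set dA := upperDensity Fol A
  set dB := upperDensity Fol B
  set δ := (α - dA - dB) / 2 with hδ
  have hδpos : 0 < δ := by simp only [hδ]; linarith
  obtain ⟨mA, hmA⟩ := exists_forall_lt hFol (show dA < dA + δ by linarith)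
  obtain ⟨mB, hmB⟩ := exists_forall_lt hFol (show dB < dB + δ by linarith)
  obtain ⟨m, hm1, hm2⟩ := exists_ge_ge mA mB
  obtain ⟨n, hmn, hn⟩ := hα m
  have h1 := hmA n (hm1.trans hmn)
  have h2 := hmB n (hm2.trans hmn)
  have h3 := dRatio_union_le (Fol := Fol) n A B
  linarith

lemma one_le_upperDensity_univ : (1:ℝ) ≤ upperDensity Fol (Set.univ : Set G) := by
  refine le_upperDensity hFol (fun m => ⟨m, le_refl m, ?_⟩)
  unfold dRatio
  rw [Set.inter_univ, Set.ncard_coe_finset, div_self (folCard_pos hFol m).ne']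

lemma upperDensity_empty : upperDensity Fol (∅ : Set G) = 0 := by
  refine le_antisymm (upperDensity_le fun α hα => ?_) (upperDensity_nonneg' hFol _)
  obtain ⟨n, -, hn⟩ := hα Classical.ofNonempty
  simpa [dRatio] using hn

omit hFol in
lemma dRatio_translate_le (n : D) (g : G) (A : Set G) :
    dRatio Fol n {h | g * h ∈ A} ≤ dRatio Fol n A +
      ((symmDiff ((Fol n).image fun h => g * h) (Fol n)).card : ℝ) / (Fol n).card := by
  set T : Finset G := (Fol n).image fun h => g * h with hT
  have hinj : Function.Injective (fun h : G => g * h) := fun a b hab => by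
    simpa using mul_left_cancel hab
  have hsub : (fun h : G => g * h) '' ((Fol n : Set G) ∩ {h | g * h ∈ A}) ⊆
      ((Fol n : Set G) ∩ A) ∪ ((T : Set G) \ (Fol n : Set G)) := by
    rintro - ⟨h, ⟨hF, hA⟩, rfl⟩
    by_cases hgh : g * h ∈ (Fol n : Set G)
    · exact Or.inl ⟨hgh, hA⟩
    · exact Or.inr ⟨Finset.mem_coe.mpr (Finset.mem_image_of_mem _ hF), hgh⟩
  have h1 : ((Fol n : Set G) ∩ {h | g * h ∈ A}).ncard =
      ((fun h : G => g * h) '' ((Fol n : Set G) ∩ {h | g * h ∈ A})).ncard :=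
    (Set.ncard_image_of_injective _ hinj).symm
  have hfin : (((Fol n : Set G) ∩ A) ∪ ((T : Set G) \ (Fol n : Set G))).Finite :=
    ((Fol n).finite_toSet.inter_of_left A).union T.finite_toSet.diff
  have h2 : ((fun h : G => g * h) '' ((Fol n : Set G) ∩ {h | g * h ∈ A})).ncard ≤
      (((Fol n : Set G) ∩ A)).ncard + ((T : Set G) \ (Fol n : Set G)).ncard :=
    le_trans (Set.ncard_le_ncard hsub hfin) (Set.ncard_union_le _ _)
  have h3 : ((T : Set G) \ (Fol n : Set G)).ncard ≤ (symmDiff T (Fol n)).card := by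
    have : ((T : Set G) \ (Fol n : Set G)) = ((T \ Fol n : Finset G) : Set G) := by
      simp [Finset.coe_sdiff]
    rw [this, Set.ncard_coe_finset]
    exact Finset.card_le_card (by rw [symmDiff_def]; exact Finset.subset_union_left)
  unfold dRatio
  rw [← add_div]
  gcongr
  calc (((Fol n : Set G) ∩ {h | g * h ∈ A}).ncard : ℝ)
      ≤ ((((Fol n : Set G) ∩ A)).ncard : ℝ) + (((T : Set G) \ (Fol n : Set G)).ncard : ℝ) := by
        rw [h1]; exact_mod_cast h2
    _ ≤ _ := add_le_add le_rfl (by exact_mod_cast h3)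

lemma upperDensity_translate (g : G) (A : Set G) :
    upperDensity Fol {h | g * h ∈ A} ≤ upperDensity Fol A := by
  refine upperDensity_le fun α hα => ?_
  refine le_of_forall_pos_le_add fun ε hε => ?_
  have hsd : ∀ᶠ n in (atTop : Filter D),
      ((symmDiff ((Fol n).image fun h => g * h) (Fol n)).card : ℝ) / (Fol n).card < ε :=
    (hFol.2 g).eventually (gt_mem_nhds hε)
  obtain ⟨m₀, hm₀⟩ := eventually_atTop.mp hsd
  have : α - ε ∈ dSet Fol A := by
    intro m
    obtain ⟨m', hm'1, hm'2⟩ := exists_ge_ge m m₀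
    obtain ⟨n, hmn, hn⟩ := hα m'
    refine ⟨n, hm'1.trans hmn, ?_⟩
    have h1 := dRatio_translate_le (Fol := Fol) n g A
    have h2 := hm₀ n (hm'2.trans hmn)
    linarith
  linarith [le_upperDensity hFol this]

lemma folCard_large (k : ℕ) : ∀ᶠ n in (atTop : Filter D), (k : ℝ) < (Fol n).card := by
  obtain ⟨S, hScard⟩ := Infinite.exists_subset_card_eq G (k + 1)
  have hev : ∀ᶠ n in (atTop : Filter D), ∀ g ∈ S,
      ((symmDiff ((Fol n).image fun h => g * h) (Fol n)).card : ℝ) / (Fol n).card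
        < 1 / (k + 1) := by
    rw [Filter.eventually_all_finset]
    intro g _
    exact (hFol.2 g).eventually (gt_mem_nhds (by positivity))
  filter_upwards [hev] with n hn
  set F := Fol n with hF
  set c : ℝ := (F.card : ℝ) with hc
  have hcpos : (0:ℝ) < c := folCard_pos hFol n
  -- lower bound for each intersection
  have hlow : ∀ g ∈ S, c - c / (k + 1) < (((F.image fun h => g * h) ∩ F).card : ℝ) := by
    intro g hg
    set T : Finset G := F.image fun h => g * h with hT
    have hinj : Function.Injective (fun h : G => g * h) := fun a b hab => by
      simpa using mul_left_cancel hab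
    have hTcard : T.card = F.card := Finset.card_image_of_injective _ hinj
    have hsplit : (T ∩ F).card + (T \ F).card = T.card := Finset.card_inter_add_card_sdiff T F
    have hsd : (T \ F).card ≤ (symmDiff T F).card :=
      Finset.card_le_card (by rw [symmDiff_def]; exact Finset.subset_union_left)
    have hsmall : ((symmDiff T F).card : ℝ) < c / (k + 1) := by
      have := hn g hg
      rw [div_lt_iff₀ hcpos] at this
      calc ((symmDiff T F).card : ℝ) < 1 / (k+1) * c := this
        _ = c / (k+1) := by ring
    have : ((T ∩ F).card : ℝ) = c - ((T \ F).card : ℝ) := by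
      have := hsplit
      have h' : ((T ∩ F).card : ℝ) + ((T \ F).card : ℝ) = c := by
        rw [hc, ← hTcard]; exact_mod_cast hsplit
      linarith
    rw [this]
    have : ((T \ F).card : ℝ) < c / (k+1) := lt_of_le_of_lt (by exact_mod_cast hsd) hsmall
    linarith
  -- double counting upper bound
  have hdc : ∑ g ∈ S, ((F.image fun h => g * h) ∩ F).card ≤ F.card * F.card := by
    have heq : ∀ g : G, (F.image fun h => g * h) ∩ F = F.filter fun b => g⁻¹ * b ∈ F := by
      intro g
      ext b
      simp only [Finset.mem_inter, Finset.mem_image, Finset.mem_filter]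
      constructor
      · rintro ⟨⟨a, ha, rfl⟩, hb⟩
        exact ⟨hb, by simpa using ha⟩
      · rintro ⟨hb, ha⟩
        exact ⟨⟨g⁻¹ * b, ha, by simp⟩, hb⟩
    calc ∑ g ∈ S, ((F.image fun h => g * h) ∩ F).card
        = ∑ g ∈ S, ∑ b ∈ F, if g⁻¹ * b ∈ F then 1 else 0 := by
          refine Finset.sum_congr rfl fun g _ => ?_
          rw [heq g, Finset.card_filter]
      _ = ∑ b ∈ F, ∑ g ∈ S, if g⁻¹ * b ∈ F then 1 else 0 := Finset.sum_comm
      _ = ∑ b ∈ F, (S.filter fun g => g⁻¹ * b ∈ F).card := by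
          refine Finset.sum_congr rfl fun b _ => ?_
          rw [Finset.card_filter]
      _ ≤ ∑ b ∈ F, F.card := by
          refine Finset.sum_le_sum fun b _ => ?_
          refine Finset.card_le_card_of_injOn (fun g => g⁻¹ * b) ?_ ?_
          · intro g hg
            exact (Finset.mem_filter.mp hg).2
          · intro g₁ _ g₂ _ h
            have : g₁⁻¹ = g₂⁻¹ := mul_right_cancel h
            simpa using congrArg Inv.inv this
      _ = F.card * F.card := by rw [Finset.sum_const, smul_eq_mul]
  -- combine
  have hsum : (k : ℝ) * c < ∑ g ∈ S, (((F.image fun h => g * h) ∩ F).card : ℝ) := by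
    have hne : S.Nonempty := Finset.card_pos.mp (by omega)
    calc (k:ℝ) * c = ∑ _g ∈ S, (c - c / (k+1)) := by
          rw [Finset.sum_const, hScard, nsmul_eq_mul]
          push_cast
          field_simp
          ring
      _ < _ := Finset.sum_lt_sum_of_nonempty hne hlow
  have hub : (∑ g ∈ S, (((F.image fun h => g * h) ∩ F).card : ℝ)) ≤ c * c := by
    rw [← Nat.cast_sum]
    rw [hc]
    exact_mod_cast hdc
  have : (k:ℝ) * c < c * c := lt_of_lt_of_le hsum hub
  nlinarith

lemma upperDensity_finite_zero {S : Set G} (hS : S.Finite) : upperDensity Fol S = 0 := by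
  refine le_antisymm (upperDensity_le fun α hα => ?_) (upperDensity_nonneg' hFol _)
  by_contra hc
  push_neg at hc
  obtain ⟨k, hk⟩ := exists_nat_gt ((S.ncard : ℝ) / α)
  obtain ⟨m₀, hm₀⟩ := eventually_atTop.mp (folCard_large hFol k)
  obtain ⟨n, hmn, hn⟩ := hα m₀
  have hcard : (k : ℝ) < (Fol n).card := hm₀ n hmn
  have hcpos : (0:ℝ) < (Fol n).card := folCard_pos hFol n
  have hle : dRatio Fol n S ≤ (S.ncard : ℝ) / (Fol n).card := by
    unfold dRatio
    gcongr
    · exact inter_subset_right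
  have h1 : (S.ncard : ℝ) / (Fol n).card < α := by
    rw [div_lt_iff₀ hcpos]
    have h2 : (S.ncard : ℝ) / α < (Fol n).card := lt_trans hk hcard
    rw [div_lt_iff₀ hc] at h2
    linarith [mul_comm α ((Fol n).card : ℝ)]
  linarith [hn]

lemma upperDensity_le_diff (A S : Set G) (hS : S.Finite) :
    upperDensity Fol A ≤ upperDensity Fol (A \ S) := by
  have h1 : A ⊆ (A \ S) ∪ S := by
    intro a ha
    by_cases h : a ∈ S
    · exact Or.inr h
    · exact Or.inl ⟨ha, h⟩
  calc upperDensity Fol A ≤ upperDensity Fol ((A \ S) ∪ S) := upperDensity_mono hFol h1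
    _ ≤ upperDensity Fol (A \ S) + upperDensity Fol S := upperDensity_union_le hFol _ _
    _ = upperDensity Fol (A \ S) := by rw [upperDensity_finite_zero hFol hS, add_zero]

end Density

/-- The pair `{x, y}` is proximal. -/
def IsProximalPair (G : Type*) [Group G] {X : Type*} [MetricSpace X] [MulAction G X]
    (x y : X) : Prop :=
  ∃ t : ℕ → G, Tendsto (fun n => dist ((t n) • x) ((t n) • y)) atTop (nhds 0)

/-- The pair `{x, y}` is asymptotic. -/
def IsAsymptoticPair (G : Type*) [Group G] {X : Type*} [MetricSpace X] [MulAction G X]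
    (x y : X) : Prop :=
  ∀ ε : ℝ, 0 < ε → ∃ F : Finset G, ∀ g : G, g ∉ F → dist (g • x) (g • y) < ε

section Ultrafilters

variable {G : Type} [Group G]

/-- The product of two ultrafilters on `G`: `A ∈ p ⬝ q ↔ {g | {h | g * h ∈ A} ∈ q} ∈ p`. -/
noncomputable def ufMul (p q : Ultrafilter G) : Ultrafilter G :=
  p.bind fun a => q.map fun b => a * b

/-- A left ideal of `βG`: a nonempty `L` with `βG ⬝ L ⊆ L`. -/
def IsLeftIdealUF (L : Set (Ultrafilter G)) : Prop :=
  L.Nonempty ∧ ∀ p : Ultrafilter G, ∀ q ∈ L, ufMul p q ∈ L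

/-- A minimal left ideal of `βG`: a left ideal containing no proper left ideal. -/
def IsMinimalLeftIdealUF (L : Set (Ultrafilter G)) : Prop :=
  IsLeftIdealUF L ∧ ∀ L' ⊆ L, IsLeftIdealUF L' → L' = L

/-- A minimal idempotent of `βG`: an idempotent lying in some minimal left ideal. -/
def IsMinimalIdempotentUF (p : Ultrafilter G) : Prop :=
  ufMul p p = p ∧ ∃ L : Set (Ultrafilter G), IsMinimalLeftIdealUF L ∧ p ∈ L

/-- `S ⊆ G` is a central set: it belongs to some minimal idempotent ultrafilter. -/
def IsCentralSet (S : Set G) : Prop :=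
  ∃ p : Ultrafilter G, IsMinimalIdempotentUF p ∧ S ∈ p

end Ultrafilters

section UFLemmas

variable {G : Type} [Group G]

attribute [local instance] Ultrafilter.mul Ultrafilter.semigroup

lemma mem_ufMul {p q : Ultrafilter G} {A : Set G} :
    A ∈ ufMul p q ↔ {a : G | {b : G | a * b ∈ A} ∈ q} ∈ p := by
  show A ∈ (Ultrafilter.bind p fun a => Ultrafilter.map (fun b => a * b) q) ↔ _
  rw [← Ultrafilter.mem_coe]
  rw [show ((Ultrafilter.bind p fun a => Ultrafilter.map (fun b => a * b) q) : Filter G)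
      = Filter.bind ↑p (fun a => ↑(Ultrafilter.map (fun b => a * b) q)) from rfl]
  rw [Filter.mem_bind']
  rfl

lemma ufMul_eq (p q : Ultrafilter G) : ufMul p q = p * q := by
  apply Ultrafilter.coe_inj.mp
  apply Filter.ext
  intro A
  rw [show (A ∈ (↑(ufMul p q) : Filter G)) ↔ A ∈ ufMul p q from Iff.rfl, mem_ufMul]
  exact (Ultrafilter.eventually_mul p q (· ∈ A)).symm

lemma ufMul_assoc (p q r : Ultrafilter G) : ufMul (ufMul p q) r = ufMul p (ufMul q r) := by
  simp only [ufMul_eq]; exact mul_assoc p q r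

lemma continuous_ufMul_right (q : Ultrafilter G) : Continuous fun p : Ultrafilter G => ufMul p q := by
  have h : (fun p : Ultrafilter G => ufMul p q) = (· * q) := funext fun p => ufMul_eq p q
  rw [h]
  exact Ultrafilter.continuous_mul_left q

end UFLemmas

section MinIdem

variable {G : Type} [Group G] [Infinite G] [DecidableEq G]
variable {D : Type*} [Preorder D] [IsDirected D (· ≤ ·)] [Nonempty D]
variable (Fol : D → Finset G)

attribute [local instance] Ultrafilter.mul Ultrafilter.semigroup

/-- ultrafilters all of whose members have positive upper density -/
def posDensityUF : Set (Ultrafilter G) :=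
  {u : Ultrafilter G | ∀ A : Set G, A ∈ u → 0 < upperDensity Fol A}

lemma posDensityUF_isClosed : IsClosed (posDensityUF (G := G) Fol) := by
  have h : posDensityUF (G := G) Fol =
      ⋂ (A : Set G) (_ : ¬ 0 < upperDensity Fol A), {u : Ultrafilter G | A ∈ u}ᶜ := by
    ext u
    simp only [posDensityUF, Set.mem_setOf_eq, Set.mem_iInter, Set.mem_compl_iff]
    exact ⟨fun h A h2 hA => h2 (h A hA), fun h A hA => by_contra fun h2 => h A h2 hA⟩
  rw [h]
  exact isClosed_iInter fun A => isClosed_iInter fun _ =>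
    (ultrafilter_isOpen_basic A).isClosed_compl

variable {Fol}
variable (hFol : IsFolnerNet Fol)
include hFol

lemma posDensityUF_nonempty : (posDensityUF (G := G) Fol).Nonempty := by
  let f : Filter G :=
    { sets := {A : Set G | upperDensity Fol Aᶜ = 0}
      univ_sets := by
        simp only [Set.mem_setOf_eq, Set.compl_univ]
        exact upperDensity_empty hFol
      sets_of_superset := by
        intro A B hA hAB
        simp only [Set.mem_setOf_eq] at hA ⊢
        refine le_antisymm ?_ (upperDensity_nonneg' hFol _)
        calc upperDensity Fol Bᶜ ≤ upperDensity Fol Aᶜ :=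
              upperDensity_mono hFol (Set.compl_subset_compl.mpr hAB)
          _ = 0 := hA
      inter_sets := by
        intro A B hA hB
        simp only [Set.mem_setOf_eq] at hA hB ⊢
        refine le_antisymm ?_ (upperDensity_nonneg' hFol _)
        rw [Set.compl_inter]
        calc upperDensity Fol (Aᶜ ∪ Bᶜ) ≤ upperDensity Fol Aᶜ + upperDensity Fol Bᶜ :=
              upperDensity_union_le hFol _ _
          _ = 0 := by rw [hA, hB, add_zero] }
  have hfne : f.NeBot := by
    rw [Filter.neBot_iff]
    intro hbot
    have hempty : (∅ : Set G) ∈ f := hbot ▸ Filter.mem_bot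
    have hzero : upperDensity Fol (∅ : Set G)ᶜ = 0 := hempty
    rw [Set.compl_empty] at hzero
    linarith [one_le_upperDensity_univ hFol]
  obtain ⟨u, hu⟩ := Ultrafilter.exists_le f
  refine ⟨u, fun A hA => ?_⟩
  rcases lt_or_eq_of_le (upperDensity_nonneg' hFol A) with h | h
  · exact h
  have hAc : Aᶜ ∈ f := by
    show upperDensity Fol Aᶜᶜ = 0
    rw [compl_compl]; exact h.symm
  have hcu : Aᶜ ∈ u := hu hAc
  exact absurd hA (Ultrafilter.compl_mem_iff_notMem.mp hcu)

lemma posDensityUF_leftIdeal : IsLeftIdealUF (posDensityUF (G := G) Fol) := by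
  refine ⟨posDensityUF_nonempty hFol, fun p q hq A hA => ?_⟩
  rw [mem_ufMul] at hA
  obtain ⟨a, ha⟩ := Ultrafilter.nonempty_of_mem hA
  have h1 : 0 < upperDensity Fol {b : G | a * b ∈ A} := hq _ ha
  exact lt_of_lt_of_le h1 (upperDensity_translate hFol a A)

/-- main construction: a minimal idempotent ultrafilter all of whose members
have positive upper density -/
lemma exists_minimal_idempotent_posDensity :
    ∃ u : Ultrafilter G, IsMinimalIdempotentUF u ∧
      ∀ A : Set G, A ∈ u → 0 < upperDensity Fol A := by
  classical
  set Δ := posDensityUF (G := G) Fol with hΔdef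
  let 𝒮 : Set (Set (Ultrafilter G)) := {L | L ⊆ Δ ∧ IsClosed L ∧ IsLeftIdealUF L}
  have hΔS : Δ ∈ 𝒮 := ⟨Set.Subset.rfl, posDensityUF_isClosed Fol, posDensityUF_leftIdeal hFol⟩
  have hzorn : ∃ L, L ⊆ Δ ∧ Minimal (· ∈ 𝒮) L := by
    refine zorn_superset_nonempty 𝒮 (fun c hcS hc hcne => ?_) Δ hΔS
    obtain ⟨s₀, hs₀⟩ := hcne
    refine ⟨⋂₀ c, ⟨?_, ?_, ?_, ?_⟩, fun s hs => Set.sInter_subset_of_mem hs⟩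
    · exact (Set.sInter_subset_of_mem hs₀).trans (hcS hs₀).1
    · exact isClosed_sInter fun t ht => (hcS ht).2.1
    · -- nonempty, via compactness
      have hne : (⋂₀ c).Nonempty := by
        rw [Set.sInter_eq_iInter]
        haveI : Nonempty c := ⟨⟨s₀, hs₀⟩⟩
        haveI : IsRefl (Set (Ultrafilter G)) (flip (· ⊆ ·)) := ⟨fun _ => Set.Subset.rfl⟩
        apply IsCompact.nonempty_iInter_of_directed_nonempty_isCompact_isClosed
          ((↑) : c → Set (Ultrafilter G))
        · exact (IsChain.directedOn hc.symm).directed_val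
        · exact fun i => (hcS i.prop).2.2.1
        · exact fun i => (hcS i.prop).2.1.isCompact
        · exact fun i => (hcS i.prop).2.1
      exact hne
    · intro p q hq
      rw [Set.mem_sInter] at hq ⊢
      exact fun t ht => (hcS ht).2.2.2 p q (hq t ht)
  obtain ⟨L, hLΔ, hLmin⟩ := hzorn
  obtain ⟨hLsub, hLclosed, hLideal⟩ := hLmin.prop
  -- idempotent in L
  have hmulmem : ∀ x ∈ L, ∀ y ∈ L, x * y ∈ L := by
    intro x hx y hy
    rw [← ufMul_eq]
    exact hLideal.2 x y hy
  obtain ⟨u, huL, huu⟩ := exists_idempotent_in_compact_subsemigroup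
    Ultrafilter.continuous_mul_left L hLideal.1 hLclosed.isCompact hmulmem
  have huidem : ufMul u u = u := by rw [ufMul_eq]; exact huu
  -- L is a minimal left ideal among all left ideals
  have hLminideal : IsMinimalLeftIdealUF L := by
    refine ⟨hLideal, fun L' hL'sub hL'ideal => ?_⟩
    obtain ⟨q, hq⟩ := hL'ideal.1
    set K := Set.range (fun p : Ultrafilter G => ufMul p q) with hK
    have hKL' : K ⊆ L' := by
      rintro - ⟨p, rfl⟩
      exact hL'ideal.2 p q hq
    have hKS : K ∈ 𝒮 := by
      refine ⟨(hKL'.trans hL'sub).trans hLsub, ?_, ?_, ?_⟩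
      · exact (isCompact_range (continuous_ufMul_right q)).isClosed
      · exact ⟨ufMul q q, q, rfl⟩
      · rintro p - ⟨p', rfl⟩
        exact ⟨ufMul p p', by change ufMul (ufMul p p') q = ufMul p (ufMul p' q); exact ufMul_assoc p p' q⟩
    have hLK : L ⊆ K := hLmin.2 hKS (hKL'.trans hL'sub)
    exact le_antisymm hL'sub (hLK.trans hKL')
  exact ⟨u, ⟨huidem, L, hLminideal, huL⟩, fun A hA => hLsub huL A hA⟩

end MinIdem

/-- Corollary 3.3: if `C_F(x)` is not S-generic, then there is `y ∈ C_F(x)` such that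
`{x, y}` is Li–Yorke chaotic and, for every `ε > 0`, `N(x, B_ε(y))` is a central set of `G`
with positive upper density relative to `F`. -/
theorem central_liYorke_of_not_Sgeneric
    {G : Type} [Group G] [Infinite G] [DecidableEq G]
    {D : Type*} [Preorder D] [IsDirected D (· ≤ ·)] [Nonempty D]
    {X : Type*} [MetricSpace X] [CompactSpace X] [MulAction G X]
    (hcont : ∀ g : G, Continuous fun y : X => g • y)
    (Fol : D → Finset G) (hFol : IsFolnerNet Fol) (x : X)
    (hnS : ¬ ∃ z ∈ minCenter Fol x, minCenter Fol z = minCenter Fol x) :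
    ∃ y ∈ minCenter Fol x,
      (IsProximalPair G x y ∧ ¬ IsAsymptoticPair G x y) ∧
      ∀ ε : ℝ, 0 < ε →
        IsCentralSet {g : G | g • x ∈ Metric.ball y ε} ∧
        0 < upperDensity Fol {g : G | g • x ∈ Metric.ball y ε} := by
  classical
  obtain ⟨u, humin, hupos⟩ := exists_minimal_idempotent_posDensity (G := G) hFol
  set f : G → X := fun g => g • x with hf
  obtain ⟨y, -, hy⟩ := isCompact_univ.ultrafilter_le_nhds (u.map f)
    (by rw [le_principal_iff]; exact univ_mem)
  have htend : Tendsto f (↑u) (nhds y) := by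
    rw [Filter.Tendsto, ← Ultrafilter.coe_map]; exact hy
  have hyU : ∀ U : Set X, IsOpen U → y ∈ U → {g : G | g • x ∈ U} ∈ u := by
    intro U hU hyU
    have h1 : U ∈ u.map f := hy (hU.mem_nhds hyU)
    exact Ultrafilter.mem_map.mp h1
  have huidem : ufMul u u = u := humin.1
  -- u-limit of g • y is also y
  have hyY : ∀ U : Set X, IsOpen U → y ∈ U → {g : G | g • y ∈ U} ∈ u := by
    intro U hU hyU'
    obtain ⟨ε, hε, hball⟩ := Metric.isOpen_iff.mp hU y hyU'
    set W := Metric.ball y (ε/2) with hW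
    have hA : {g : G | g • x ∈ W} ∈ u :=
      hyU _ Metric.isOpen_ball (Metric.mem_ball_self (by linarith))
    have hA2 : {g : G | g • x ∈ W} ∈ ufMul u u := by rw [huidem]; exact hA
    rw [mem_ufMul] at hA2
    have hsub : {a : G | {b : G | (a * b) • x ∈ W} ∈ u} ⊆ {g : G | g • y ∈ U} := by
      intro g hg
      have htend2 : Tendsto (fun b : G => (g * b) • x) ↑u (nhds (g • y)) := by
        have h2 := ((hcont g).tendsto y).comp htend
        have heq : (fun b : G => (g * b) • x) = (fun z : X => g • z) ∘ f := by
          funext b; simp [hf, mul_smul]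
        rw [heq]; exact h2
      have hcl : g • y ∈ closure W :=
        mem_closure_of_tendsto htend2 (by exact hg)
      have h3 : g • y ∈ Metric.closedBall y (ε/2) := Metric.closure_ball_subset_closedBall hcl
      apply hball
      rw [Metric.mem_closedBall] at h3
      rw [Metric.mem_ball]
      linarith
    exact Filter.mem_of_superset hA2 hsub
  have hymem : y ∈ minCenter Fol x := fun U hU hyU' => hupos _ (hyU U hU hyU')
  refine ⟨y, hymem, ⟨?_, ?_⟩, ?_⟩
  · -- proximal
    have hprox : ∀ n : ℕ, ∃ g : G,
        dist (g • x) y < 1/(n+1) ∧ dist (g • y) y < 1/(n+1) := by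
      intro n
      have hpos : (0:ℝ) < 1/(n+1) := by positivity
      have h1 : {g : G | g • x ∈ Metric.ball y (1/(n+1))} ∈ u :=
        hyU _ Metric.isOpen_ball (Metric.mem_ball_self hpos)
      have h2 : {g : G | g • y ∈ Metric.ball y (1/(n+1))} ∈ u :=
        hyY _ Metric.isOpen_ball (Metric.mem_ball_self hpos)
      obtain ⟨g, hg1, hg2⟩ := Ultrafilter.nonempty_of_mem (Filter.inter_mem h1 h2)
      exact ⟨g, Metric.mem_ball.mp hg1, Metric.mem_ball.mp hg2⟩
    choose t ht using hprox
    refine ⟨t, ?_⟩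
    have hb : ∀ n : ℕ, dist (t n • x) (t n • y) ≤ 2 * (1/(n+1)) := by
      intro n
      calc dist (t n • x) (t n • y) ≤ dist (t n • x) y + dist y (t n • y) := dist_triangle _ _ _
        _ ≤ 1/(n+1) + 1/(n+1) := by
            have h1 := (ht n).1
            have h2 := (ht n).2
            rw [dist_comm y (t n • y)]
            linarith
        _ = 2 * (1/(n+1)) := by ring
    have hlim : Tendsto (fun n : ℕ => 2 * (1/((n:ℝ)+1))) atTop (nhds 0) := by
      have := tendsto_one_div_add_atTop_nhds_zero_nat (𝕜 := ℝ)
      have h2 := this.const_mul (2:ℝ)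
      simpa using h2
    exact squeeze_zero (fun n => dist_nonneg) hb hlim
  · -- not asymptotic
    intro hasym
    apply hnS
    refine ⟨y, hymem, ?_⟩
    have key : ∀ x' y' : X,
        (∀ ε : ℝ, 0 < ε → ∃ F : Finset G, ∀ g : G, g ∉ F → dist (g • x') (g • y') < ε) →
        minCenter Fol x' ⊆ minCenter Fol y' := by
      intro x' y' hcl w hw U hU hwU
      obtain ⟨ε, hε, hball⟩ := Metric.isOpen_iff.mp hU w hwU
      obtain ⟨F0, hF0⟩ := hcl (ε/2) (half_pos hε)
      have hA : 0 < upperDensity Fol {g : G | g • x' ∈ Metric.ball w (ε/2)} :=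
        hw _ Metric.isOpen_ball (Metric.mem_ball_self (half_pos hε))
      have hsub : {g : G | g • x' ∈ Metric.ball w (ε/2)} \ (F0 : Set G) ⊆
          {g : G | g • y' ∈ U} := by
        rintro g ⟨hg1, hg2⟩
        apply hball
        rw [Metric.mem_ball]
        have hd1 : dist (g • x') w < ε/2 := Metric.mem_ball.mp hg1
        have hd2 : dist (g • y') (g • x') < ε/2 := by
          rw [dist_comm]; exact hF0 g hg2
        calc dist (g • y') w ≤ dist (g • y') (g • x') + dist (g • x') w := dist_triangle _ _ _
          _ < ε/2 + ε/2 := by linarith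
          _ = ε := by ring
      calc (0:ℝ) < upperDensity Fol {g : G | g • x' ∈ Metric.ball w (ε/2)} := hA
        _ ≤ upperDensity Fol ({g : G | g • x' ∈ Metric.ball w (ε/2)} \ (F0 : Set G)) :=
            upperDensity_le_diff hFol _ _ F0.finite_toSet
        _ ≤ upperDensity Fol {g : G | g • y' ∈ U} := upperDensity_mono hFol hsub
    have hasym' : ∀ ε : ℝ, 0 < ε → ∃ F : Finset G, ∀ g : G, g ∉ F →
        dist (g • y) (g • x) < ε := by
      intro ε hε
      obtain ⟨F0, hF0⟩ := hasym ε hε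
      exact ⟨F0, fun g hg => by rw [dist_comm]; exact hF0 g hg⟩
    exact Set.Subset.antisymm (key y x hasym') (key x y hasym)
  · -- central set and positive density
    intro ε hε
    have hN : {g : G | g • x ∈ Metric.ball y ε} ∈ u :=
      hyU _ Metric.isOpen_ball (Metric.mem_ball_self hε)
    exact ⟨⟨u, humin, hN⟩, hupos _ hN⟩
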